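/- A derivation ϑ = ϑ^λ∂_λ + ϑ^i∂_i + Σ_{0<|Λ|} ϑ^i_Λ ∂^Λ_i of the ℝ-ring O⁰_∞ is contact if and only if it takes the form ϑ = ϑ^λ∂_λ + ϑ^i∂_i + Σ_{|Λ|>0} [d_Λ(ϑ^i − y^i_μ ϑ^μ) + y^i_{μ+Λ} ϑ^μ] ∂^Λ_i, i.e., it is the infinite order jet prolongation of the generalized vector field υ = ϑ^λ∂_λ + ϑ^i∂_i. -/

import Mathlib

/-!
A coordinate model of the differential calculus on the infinite order jet
manifold of a fiber bundle `Y → X` with `n`-dimensional base and fibre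
coordinates indexed by `ι`.

* Adapted jet coordinates: the base coordinates `x^λ`, `λ : Fin n`, and the
  jet coordinates `y^i_Λ` indexed by `i : ι` and a symmetric multi-index
  `Λ : Multiset (Fin n)` (with `Λ = 0` giving the fibre coordinates `y^i`).
* `JetRing n ι` models the ring `O⁰_∞` of functions of finitely many jet
  coordinates (polynomial model).
* `totalDeriv lam` is the total derivative
  `d_λ = ∂_λ + Σ_Λ y^i_{λ+Λ} ∂^Λ_i`, and `totalDerivIter l` is
  `d_Λ = d_{λ_r} ∘ ⋯ ∘ d_{λ_1}` for `Λ` presented by the list `l`.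
* `OneForm n ι` models the `O⁰_∞`-module `O¹_∞` with basis `dx^λ`, `dy^i_Λ`;
  `dJet f` is the differential `df = ∂_v f d v`, and
  `contactForm i Λ` is the contact one-form `θ^i_Λ = dy^i_Λ − y^i_{λ+Λ} dx^λ`.
* A derivation `ϑ = ϑ^λ∂_λ + ϑ^i∂_i + Σ ϑ^i_Λ ∂^Λ_i` of `O⁰_∞` is determined by
  its coefficients `υ : JetVar n ι → JetRing n ι`; `lieDeriv υ` is the induced
  Lie derivative `𝐋_ϑ = ϑ⌋d + d(ϑ⌋·)` on one-forms, and `ϑ` is *contact* iff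
  `𝐋_ϑ` preserves the contact ideal, i.e. maps every contact form `θ^i_Λ` into
  the submodule generated by the contact forms.
-/

/-- Jet coordinates: `Sum.inl λ` is the base coordinate `x^λ`;
`Sum.inr (i, Λ)` is the jet coordinate `y^i_Λ`. -/
abbrev JetVar (n : ℕ) (ι : Type*) := (Fin n) ⊕ (ι × Multiset (Fin n))

/-- The ring `O⁰_∞` of functions on finite order jet manifolds (coordinate model). -/
abbrev JetRing (n : ℕ) (ι : Type*) := MvPolynomial (JetVar n ι) ℝ

open MvPolynomial

/-- The total derivative `d_λ = ∂_λ + Σ_{0≤|Λ|} y^i_{λ+Λ} ∂^Λ_i`. -/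
noncomputable def totalDeriv (n : ℕ) (ι : Type*) (lam : Fin n) :
    Derivation ℝ (JetRing n ι) (JetRing n ι) :=
  MvPolynomial.mkDerivation ℝ fun v =>
    match v with
    | Sum.inl μ => if μ = lam then 1 else 0
    | Sum.inr (i, Λ) => X (Sum.inr (i, lam ::ₘ Λ))

/-- The iterated total derivative `d_Λ = d_{λ_r} ∘ ⋯ ∘ d_{λ_1}` for the
multi-index `Λ` presented by a list `l = [λ_r, …, λ_1]`. -/
noncomputable def totalDerivIter (n : ℕ) (ι : Type*) :
    List (Fin n) → JetRing n ι →ₗ[ℝ] JetRing n ι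
  | [] => LinearMap.id
  | lam :: l => (totalDeriv n ι lam).toLinearMap.comp (totalDerivIter n ι l)

/-- The `O⁰_∞`-module `O¹_∞` of one-forms, with basis `{dx^λ, dy^i_Λ}`. -/
abbrev OneForm (n : ℕ) (ι : Type*) := JetVar n ι →₀ JetRing n ι

/-- The differential `df = Σ_v (∂f/∂v) dv` of a function `f ∈ O⁰_∞`. -/
noncomputable def dJet {n : ℕ} {ι : Type*} (f : JetRing n ι) : OneForm n ι :=
  ∑ v ∈ f.vars, Finsupp.single v (pderiv v f)

/-- The contact one-form `θ^i_Λ = dy^i_Λ − y^i_{λ+Λ} dx^λ`. -/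
noncomputable def contactForm {n : ℕ} {ι : Type*} (i : ι) (Λ : Multiset (Fin n)) :
    OneForm n ι :=
  Finsupp.single (Sum.inr (i, Λ)) 1 -
    ∑ lam : Fin n, Finsupp.single (Sum.inl lam) (X (Sum.inr (i, lam ::ₘ Λ)))

/-- The contact ideal (in degree one): the `O⁰_∞`-submodule of `O¹_∞`
generated by the contact forms `θ^i_Λ`. -/
noncomputable def contactSubmodule (n : ℕ) (ι : Type*) : Submodule (JetRing n ι) (OneForm n ι) :=
  Submodule.span (JetRing n ι)
    (Set.range fun p : ι × Multiset (Fin n) => contactForm p.1 p.2)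

/-- The Lie derivative `𝐋_ϑ(Σ_v a_v dv) = Σ_v ϑ(a_v) dv + Σ_v a_v d(ϑ(v))`
on one-forms along the derivation `ϑ` with coefficients `υ`. -/
noncomputable def lieDeriv {n : ℕ} {ι : Type*} (υ : JetVar n ι → JetRing n ι)
    (ω : OneForm n ι) : OneForm n ι :=
  ω.sum fun v a =>
    Finsupp.single v ((MvPolynomial.mkDerivation ℝ υ : Derivation ℝ (JetRing n ι) (JetRing n ι)) a)
      + a • dJet (υ v)

/-- A derivation of `O⁰_∞` (with coefficients `υ`) is *contact* iff its Lie
derivative preserves the contact ideal of the algebra `O*_∞`. -/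
def IsContactDerivation {n : ℕ} {ι : Type*} (υ : JetVar n ι → JetRing n ι) : Prop :=
  ∀ (i : ι) (Λ : Multiset (Fin n)), lieDeriv υ (contactForm i Λ) ∈ contactSubmodule n ι

section Backlund

open MvPolynomial Finsupp

variable {n : ℕ} {ι : Type*}

/-- Coefficients of the total derivative direction. -/
noncomputable def cdir (lam : Fin n) : JetVar n ι → JetRing n ι := fun v =>
  match v with
  | Sum.inl μ => if μ = lam then 1 else 0
  | Sum.inr (i, Λ) => X (Sum.inr (i, lam ::ₘ Λ))

lemma totalDeriv_eq (lam : Fin n) :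
    totalDeriv n ι lam = MvPolynomial.mkDerivation ℝ (cdir lam) := rfl

lemma cdir_inl (lam ν : Fin n) :
    cdir (ι := ι) lam (Sum.inl ν) = if ν = lam then 1 else 0 := rfl

lemma cdir_inr (lam : Fin n) (i : ι) (Λ : Multiset (Fin n)) :
    cdir lam (Sum.inr (i, Λ)) = X (Sum.inr (i, lam ::ₘ Λ)) := rfl

lemma totalDeriv_X (lam : Fin n) (v : JetVar n ι) :
    totalDeriv n ι lam (X v) = cdir lam v := by
  rw [totalDeriv_eq, mkDerivation_X]

/-- Extraction of the `dx^μ`-coefficient after reduction modulo contact forms. -/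
noncomputable def hcoeff (μ : Fin n) : OneForm n ι →ₗ[JetRing n ι] JetRing n ι :=
  Finsupp.linearCombination (JetRing n ι) (cdir μ)

lemma hcoeff_single (μ : Fin n) (v : JetVar n ι) (a : JetRing n ι) :
    hcoeff μ (Finsupp.single v a) = a * cdir μ v := by
  simp [hcoeff, Finsupp.linearCombination_single, smul_eq_mul]

lemma derivation_finset_sum_apply {α : Type*} (s : Finset α)
    (D : α → Derivation ℝ (JetRing n ι) (JetRing n ι)) (a : JetRing n ι) :
    (∑ v ∈ s, D v) a = ∑ v ∈ s, D v a := by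
  classical
  induction s using Finset.cons_induction with
  | empty => simp
  | cons x s hx ih => rw [Finset.sum_cons, Finset.sum_cons, Derivation.add_apply, ih]

/-- Chain rule: a derivation on the jet ring is determined by partial derivatives. -/
lemma derivation_apply_eq_sum (D : Derivation ℝ (JetRing n ι) (JetRing n ι)) (f : JetRing n ι) :
    D f = ∑ v ∈ f.vars, pderiv v f * D (X v) := by
  classical
  have h : D f = (∑ v ∈ f.vars, D (X v) • pderiv v) f := by
    refine derivation_eq_of_forall_mem_vars fun w hw => ?_
    rw [derivation_finset_sum_apply]
    rw [Finset.sum_eq_single w]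
    · simp [pderiv_X_self]
    · intro b hb hbw
      simp [Derivation.smul_apply, pderiv_X_of_ne (Ne.symm hbw)]
    · intro h; exact absurd hw h
  rw [h, derivation_finset_sum_apply]
  exact Finset.sum_congr rfl fun v _ => by
    rw [Derivation.smul_apply, smul_eq_mul, mul_comm]

lemma hcoeff_dJet (μ : Fin n) (f : JetRing n ι) :
    hcoeff μ (dJet f) = totalDeriv n ι μ f := by
  rw [dJet, map_sum, derivation_apply_eq_sum (totalDeriv n ι μ) f]
  exact Finset.sum_congr rfl fun v _ => by rw [hcoeff_single, totalDeriv_X]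

lemma hcoeff_contactForm (μ : Fin n) (i : ι) (Λ : Multiset (Fin n)) :
    hcoeff μ (contactForm i Λ) = 0 := by
  simp only [contactForm, map_sub, map_sum, hcoeff_single, cdir_inl, cdir_inr, one_mul,
    mul_ite, mul_one, mul_zero]
  rw [Finset.sum_ite_eq' Finset.univ μ fun lam => X (Sum.inr (i, lam ::ₘ Λ))]
  simp

lemma sub_horiz_mem (ω : OneForm n ι) :
    ω - ∑ μ : Fin n, Finsupp.single (Sum.inl μ) (hcoeff μ ω) ∈ contactSubmodule n ι := by
  classical
  induction ω using Finsupp.induction_linear with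
  | zero => simp
  | add f g hf hg =>
      have : (f + g) - ∑ μ : Fin n, Finsupp.single (Sum.inl μ) (hcoeff μ (f + g))
          = (f - ∑ μ : Fin n, Finsupp.single (Sum.inl μ) (hcoeff μ f))
            + (g - ∑ μ : Fin n, Finsupp.single (Sum.inl μ) (hcoeff μ g)) := by
        simp only [map_add, Finsupp.single_add, Finset.sum_add_distrib]
        abel
      rw [this]; exact add_mem hf hg
  | single v a =>
      match v with
      | Sum.inl lam =>
          have : (∑ μ : Fin n, Finsupp.single (Sum.inl μ : JetVar n ι)
              (hcoeff μ (Finsupp.single (Sum.inl lam) a))) = Finsupp.single (Sum.inl lam) a := by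
            simp only [hcoeff_single, cdir_inl, mul_ite, mul_one, mul_zero]
            rw [Finset.sum_congr rfl fun μ _ => apply_ite (Finsupp.single (Sum.inl μ : JetVar n ι))
              (lam = μ) a 0]
            simp [Finset.sum_ite_eq Finset.univ lam
              (fun μ => Finsupp.single (Sum.inl μ : JetVar n ι) a)]
          rw [this, sub_self]; exact zero_mem _
      | Sum.inr (i, Λ) =>
          have : Finsupp.single (Sum.inr (i, Λ) : JetVar n ι) a
              - ∑ μ : Fin n, Finsupp.single (Sum.inl μ : JetVar n ι)
                  (hcoeff μ (Finsupp.single (Sum.inr (i, Λ)) a))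
              = a • contactForm i Λ := by
            simp only [hcoeff_single, cdir_inr, contactForm, smul_sub, Finset.smul_sum,
              Finsupp.smul_single, smul_eq_mul, mul_one]
          rw [this]
          exact Submodule.smul_mem _ _ (Submodule.subset_span ⟨(i, Λ), rfl⟩)

lemma mem_contact_iff (ω : OneForm n ι) :
    ω ∈ contactSubmodule n ι ↔ ∀ μ : Fin n, hcoeff μ ω = 0 := by
  constructor
  · intro h μ
    have hle : contactSubmodule n ι ≤ LinearMap.ker (hcoeff (ι := ι) μ) := by
      rw [contactSubmodule, Submodule.span_le]
      rintro _ ⟨p, rfl⟩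
      exact hcoeff_contactForm μ p.1 p.2
    exact hle h
  · intro h
    have := sub_horiz_mem ω
    simpa [h] using this

lemma lieDeriv_single (υ : JetVar n ι → JetRing n ι) (v : JetVar n ι) (a : JetRing n ι) :
    lieDeriv υ (Finsupp.single v a) =
      Finsupp.single v
        ((MvPolynomial.mkDerivation ℝ υ : Derivation ℝ (JetRing n ι) (JetRing n ι)) a)
        + a • dJet (υ v) := by
  unfold lieDeriv
  rw [Finsupp.sum_single_index]
  simp

lemma lieDeriv_add (υ : JetVar n ι → JetRing n ι) (ω₁ ω₂ : OneForm n ι) :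
    lieDeriv υ (ω₁ + ω₂) = lieDeriv υ ω₁ + lieDeriv υ ω₂ := by
  unfold lieDeriv
  refine Finsupp.sum_add_index' (fun v => by simp) fun v a b => ?_
  rw [map_add, Finsupp.single_add, add_smul]
  abel

/-- `lieDeriv` as an additive monoid hom. -/

noncomputable def lieDerivHom (υ : JetVar n ι → JetRing n ι) : OneForm n ι →+ OneForm n ι where
  toFun := lieDeriv υ
  map_zero' := by unfold lieDeriv; simp
  map_add' := lieDeriv_add υ

lemma lieDeriv_sub (υ : JetVar n ι → JetRing n ι) (ω₁ ω₂ : OneForm n ι) :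
    lieDeriv υ (ω₁ - ω₂) = lieDeriv υ ω₁ - lieDeriv υ ω₂ :=
  map_sub (lieDerivHom υ) ω₁ ω₂

lemma lieDeriv_finset_sum {α : Type*} (υ : JetVar n ι → JetRing n ι) (s : Finset α)
    (g : α → OneForm n ι) :
    lieDeriv υ (∑ x ∈ s, g x) = ∑ x ∈ s, lieDeriv υ (g x) :=
  map_sum (lieDerivHom υ) g s

lemma hcoeff_lieDeriv_contactForm (υ : JetVar n ι → JetRing n ι) (μ : Fin n) (i : ι)
    (Λ : Multiset (Fin n)) :
    hcoeff μ (lieDeriv υ (contactForm i Λ)) =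
      totalDeriv n ι μ (υ (Sum.inr (i, Λ))) - υ (Sum.inr (i, μ ::ₘ Λ))
        - ∑ lam : Fin n, X (Sum.inr (i, lam ::ₘ Λ)) * totalDeriv n ι μ (υ (Sum.inl lam)) := by
  have hld : lieDeriv υ (contactForm i Λ)
      = lieDeriv υ (Finsupp.single (Sum.inr (i, Λ)) 1)
        - ∑ lam : Fin n, lieDeriv υ (Finsupp.single (Sum.inl lam) (X (Sum.inr (i, lam ::ₘ Λ)))) := by
    rw [contactForm, lieDeriv_sub, lieDeriv_finset_sum]
  rw [hld, map_sub, map_sum]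
  rw [lieDeriv_single, map_add, hcoeff_single, Derivation.map_one_eq_zero, one_smul,
    hcoeff_dJet]
  have hterm : ∀ lam : Fin n,
      hcoeff μ (lieDeriv υ (Finsupp.single (Sum.inl lam) (X (Sum.inr (i, lam ::ₘ Λ)))))
      = (if lam = μ then 1 else 0) * υ (Sum.inr (i, lam ::ₘ Λ))
        + X (Sum.inr (i, lam ::ₘ Λ)) * totalDeriv n ι μ (υ (Sum.inl lam)) := by
    intro lam
    rw [lieDeriv_single, map_add, hcoeff_single, mkDerivation_X, cdir_inl, map_smul,
      smul_eq_mul, hcoeff_dJet, mul_comm]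
  rw [Finset.sum_congr rfl fun lam _ => hterm lam, Finset.sum_add_distrib]
  simp only [ite_mul, one_mul, zero_mul]
  rw [Finset.sum_ite_eq' Finset.univ μ fun lam => υ (Sum.inr (i, lam ::ₘ Λ))]
  simp only [Finset.mem_univ, if_true, Finsupp.single_zero, map_zero, zero_add]
  ring

/-- The prolongation recursion. -/
lemma isContact_iff_rec (υ : JetVar n ι → JetRing n ι) :
    IsContactDerivation υ ↔
      ∀ (i : ι) (Λ : Multiset (Fin n)) (μ : Fin n),
        υ (Sum.inr (i, μ ::ₘ Λ)) =
          totalDeriv n ι μ (υ (Sum.inr (i, Λ)))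
            - ∑ lam : Fin n, X (Sum.inr (i, lam ::ₘ Λ)) * totalDeriv n ι μ (υ (Sum.inl lam)) := by
  constructor
  · intro h i Λ μ
    have h0 := (mem_contact_iff _).1 (h i Λ) μ
    rw [hcoeff_lieDeriv_contactForm] at h0
    linear_combination -h0
  · intro h i Λ
    rw [mem_contact_iff]
    intro μ
    rw [hcoeff_lieDeriv_contactForm, h i Λ μ]
    ring

/-- The generator `ϑ^i - y^i_μ ϑ^μ` of the prolongation. -/
noncomputable def gfun (υ : JetVar n ι → JetRing n ι) (i : ι) : JetRing n ι :=
  υ (Sum.inr (i, (0 : Multiset (Fin n)))) -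
    ∑ μ : Fin n, X (Sum.inr (i, ({μ} : Multiset (Fin n)))) * υ (Sum.inl μ)

lemma keystep (υ : JetVar n ι → JetRing n ι) (i : ι) (μ : Fin n) (l : List (Fin n)) :
    totalDerivIter n ι (μ :: l) (gfun υ i)
      + ∑ lam : Fin n, X (Sum.inr (i, lam ::ₘ μ ::ₘ (l : Multiset (Fin n)))) * υ (Sum.inl lam)
    = totalDeriv n ι μ (totalDerivIter n ι l (gfun υ i)
        + ∑ lam : Fin n, X (Sum.inr (i, lam ::ₘ (l : Multiset (Fin n)))) * υ (Sum.inl lam))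
      - ∑ lam : Fin n,
          X (Sum.inr (i, lam ::ₘ (l : Multiset (Fin n)))) * totalDeriv n ι μ (υ (Sum.inl lam)) := by
  have hterm : ∀ lam : Fin n,
      totalDeriv n ι μ (X (Sum.inr (i, lam ::ₘ (l : Multiset (Fin n)))) * υ (Sum.inl lam))
      = X (Sum.inr (i, lam ::ₘ μ ::ₘ (l : Multiset (Fin n)))) * υ (Sum.inl lam)
        + X (Sum.inr (i, lam ::ₘ (l : Multiset (Fin n)))) * totalDeriv n ι μ (υ (Sum.inl lam)) := by
    intro lam
    rw [Derivation.leibniz, totalDeriv_X, cdir_inr, Multiset.cons_swap, smul_eq_mul, smul_eq_mul]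
    ring
  rw [map_add, map_sum, Finset.sum_congr rfl fun lam _ => hterm lam, Finset.sum_add_distrib]
  have hiter : totalDerivIter n ι (μ :: l) (gfun υ i)
      = totalDeriv n ι μ (totalDerivIter n ι l (gfun υ i)) := rfl
  rw [hiter]
  ring

lemma rec_iff_closed (υ : JetVar n ι → JetRing n ι) :
    (∀ (i : ι) (Λ : Multiset (Fin n)) (μ : Fin n),
        υ (Sum.inr (i, μ ::ₘ Λ)) =
          totalDeriv n ι μ (υ (Sum.inr (i, Λ)))
            - ∑ lam : Fin n, X (Sum.inr (i, lam ::ₘ Λ)) * totalDeriv n ι μ (υ (Sum.inl lam)))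
    ↔ ∀ (i : ι) (l : List (Fin n)),
        υ (Sum.inr (i, (l : Multiset (Fin n)))) =
          totalDerivIter n ι l (gfun υ i)
            + ∑ μ : Fin n, X (Sum.inr (i, μ ::ₘ (l : Multiset (Fin n)))) * υ (Sum.inl μ) := by
  constructor
  · intro h i l
    induction l with
    | nil =>
        have h0 : (([] : List (Fin n)) : Multiset (Fin n)) = 0 := rfl
        rw [h0]
        show υ (Sum.inr (i, (0 : Multiset (Fin n)))) = gfun υ i + _
        rw [gfun]
        have h1 : ∀ μ : Fin n, (μ ::ₘ (0 : Multiset (Fin n))) = ({μ} : Multiset (Fin n)) :=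
          fun μ => rfl
        simp only [totalDerivIter, LinearMap.id_coe, id_eq, h1]
        ring
    | cons μ l ih =>
        have hcoe : ((μ :: l : List (Fin n)) : Multiset (Fin n)) = μ ::ₘ (l : Multiset (Fin n)) :=
          rfl
        rw [hcoe, h i (l : Multiset (Fin n)) μ, ih]
        exact (keystep υ i μ l).symm
  · intro h i Λ μ
    obtain ⟨l, rfl⟩ : ∃ l : List (Fin n), (l : Multiset (Fin n)) = Λ :=
      ⟨Λ.toList, Multiset.coe_toList Λ⟩
    have h1 := h i (μ :: l)
    have hcoe : ((μ :: l : List (Fin n)) : Multiset (Fin n)) = μ ::ₘ (l : Multiset (Fin n)) := rfl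
    rw [hcoe] at h1
    rw [h1, keystep υ i μ l, ← h i l]

end Backlund

/-- **Theorem (B\"acklund).** A derivation
`ϑ = ϑ^λ∂_λ + ϑ^i∂_i + Σ_{0<|Λ|} ϑ^i_Λ ∂^Λ_i` of the `ℝ`-ring `O⁰_∞`
(with coefficients `υ`: `ϑ^λ = υ (inl λ)`, `ϑ^i_Λ = υ (inr (i, Λ))`) is contact
if and only if it takes the form
`ϑ = ϑ^λ∂_λ + ϑ^i∂_i + Σ_{|Λ|>0} [d_Λ(ϑ^i − y^i_μ ϑ^μ) + y^i_{μ+Λ} ϑ^μ] ∂^Λ_i`,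
i.e. it is the infinite order jet prolongation of the generalized vector field
`υ = ϑ^λ∂_λ + ϑ^i∂_i`.  (Every symmetric multi-index `Λ` is presented by a
list `l`, over which the iterated total derivative `d_Λ` is computed.) -/
theorem isContactDerivation_iff_jet_prolongation
    (n : ℕ) (ι : Type*) (υ : JetVar n ι → JetRing n ι) :
    IsContactDerivation υ ↔
      ∀ (i : ι) (l : List (Fin n)),
        υ (Sum.inr (i, (l : Multiset (Fin n)))) =
          totalDerivIter n ι l
            (υ (Sum.inr (i, (0 : Multiset (Fin n)))) -
              ∑ μ : Fin n, X (Sum.inr (i, ({μ} : Multiset (Fin n)))) * υ (Sum.inl μ))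
          + ∑ μ : Fin n, X (Sum.inr (i, μ ::ₘ (l : Multiset (Fin n)))) * υ (Sum.inl μ) := by
  rw [isContact_iff_rec, rec_iff_closed]
  rfl
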